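/- arXiv:1501.07431 — 2 statements merged into one kernel-verified Lean document; each statement's English description precedes it below -/
import Mathlib

section
/- Let p be an odd prime, l ≥ 1, and consider the negacyclic code C = ⟨uv·(x+1)^{t}⟩ of length p^l over R = F_p[u,v]/⟨u²,v²,uv-vu⟩, i.e., the ideal of R[x]/⟨x^{p^l}+1⟩ generated by uv(x+1)^t, where 0 < t ≤ p^{l-1}. Then the minimum Hamming distance of C is 2. -/
set_option maxHeartbeats 1000000
set_option synthInstance.maxHeartbeats 1000000

open Polynomial MvPolynomial

/-- The ring `F_p[u,v]/⟨u², v², uv - vu⟩`. -/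
abbrev Rpuv (p : ℕ) : Type :=
  MvPolynomial (Fin 2) (ZMod p) ⧸
    Ideal.span {(MvPolynomial.X 0 : MvPolynomial (Fin 2) (ZMod p)) ^ 2,
      MvPolynomial.X 1 ^ 2,
      MvPolynomial.X 0 * MvPolynomial.X 1 - MvPolynomial.X 1 * MvPolynomial.X 0}

noncomputable instance (p : ℕ) : CommRing (Rpuv p) := Ideal.Quotient.commRing _

/-- The test algebra map to double dual numbers. -/
noncomputable def stmt17phi (p : ℕ) :=
  MvPolynomial.aeval (R := ZMod p) (σ := Fin 2)
    ![(TrivSqZeroExt.inl DualNumber.eps : DualNumber (DualNumber (ZMod p))), DualNumber.eps]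

lemma stmt17_span_le_ker (p : ℕ) :
    Ideal.span {(MvPolynomial.X 0 : MvPolynomial (Fin 2) (ZMod p)) ^ 2,
      MvPolynomial.X 1 ^ 2,
      MvPolynomial.X 0 * MvPolynomial.X 1 - MvPolynomial.X 1 * MvPolynomial.X 0} ≤
      RingHom.ker (stmt17phi p).toRingHom := by
  rw [Ideal.span_le]
  rintro x hx
  simp only [Set.mem_insert_iff, Set.mem_singleton_iff] at hx
  rcases hx with rfl | rfl | rfl <;>
    simp [RingHom.mem_ker, stmt17phi, sq, TrivSqZeroExt.inl_mul_inl,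
      DualNumber.eps_mul_eps, mul_comm]

lemma stmt17_uv_ne_zero (p : ℕ) (hp : p.Prime) :
    (Ideal.Quotient.mk _ (MvPolynomial.X 0 * MvPolynomial.X 1 :
      MvPolynomial (Fin 2) (ZMod p)) : Rpuv p) ≠ 0 := by
  haveI := Fact.mk hp
  intro h
  rw [Ideal.Quotient.eq_zero_iff_mem] at h
  have h1 := stmt17_span_le_ker p h
  rw [RingHom.mem_ker] at h1
  simp only [AlgHom.toRingHom_eq_coe, RingHom.coe_coe, map_mul, stmt17phi,
    MvPolynomial.aeval_X, Matrix.cons_val_zero, Matrix.cons_val_one, Matrix.head_cons] at h1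
  rw [show (DualNumber.eps : DualNumber (DualNumber (ZMod p))) = TrivSqZeroExt.inr 1 from rfl,
    TrivSqZeroExt.inl_mul_inr, smul_eq_mul, mul_one] at h1
  have h2 : (DualNumber.eps : DualNumber (ZMod p)) = 0 :=
    TrivSqZeroExt.inr_injective (by rw [TrivSqZeroExt.inr_zero (R := DualNumber (ZMod p))]; exact h1)
  have h3 : (1 : ZMod p) = 0 :=
    TrivSqZeroExt.inr_injective (by rw [TrivSqZeroExt.inr_zero (R := ZMod p)]; exact h2)
  exact one_ne_zero h3

lemma stmt17_charP (p : ℕ) (hp : p.Prime) : CharP (Rpuv p) p := by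
  haveI := Fact.mk hp
  apply CharP.quotient'
  intro x hx
  have h0 := stmt17_span_le_ker p hx
  rw [RingHom.mem_ker] at h0
  have h1 : ((x : ℕ) : DualNumber (DualNumber (ZMod p))) = 0 := by
    simpa using h0
  have h2 : ((x : ℕ) : ZMod p) = 0 := by
    have := congrArg TrivSqZeroExt.fst (congrArg TrivSqZeroExt.fst h1)
    simpa using this
  rw [show ((x : ℕ) : MvPolynomial (Fin 2) (ZMod p)) = MvPolynomial.C ((x : ZMod p)) by
    simp [MvPolynomial.C_eq_coe_nat], h2, map_zero]

theorem stmt_17 (p : ℕ) (hp : p.Prime) (hodd : Odd p) (l : ℕ) (hl : 1 ≤ l)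
    (u v : Rpuv p)
    (hu : u = Ideal.Quotient.mk _ (MvPolynomial.X 0))
    (hv : v = Ideal.Quotient.mk _ (MvPolynomial.X 1))
    (t : ℕ) (ht0 : 0 < t) (ht : t ≤ p ^ (l - 1))
    (C : Ideal ((Rpuv p)[X] ⧸ Ideal.span {(Polynomial.X : (Rpuv p)[X]) ^ (p ^ l) + 1}))
    (hC : C = Ideal.span
      {Ideal.Quotient.mk (Ideal.span {(Polynomial.X : (Rpuv p)[X]) ^ (p ^ l) + 1})
        (Polynomial.C (u * v) * (Polynomial.X + 1) ^ t)}) :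
    sInf {w : ℕ | ∃ f : (Rpuv p)[X], f ≠ 0 ∧ f.degree < (p ^ l : ℕ) ∧
        Ideal.Quotient.mk (Ideal.span {(Polynomial.X : (Rpuv p)[X]) ^ (p ^ l) + 1}) f ∈ C ∧
        w = f.support.card} = 2 := by
  haveI := Fact.mk hp
  haveI : CharP (Rpuv p) p := stmt17_charP p hp
  subst hC
  have huv : u * v ≠ 0 := by
    rw [hu, hv, ← map_mul]
    exact stmt17_uv_ne_zero p hp
  have hn0 : p ^ (l - 1) ≠ 0 := pow_ne_zero _ hp.pos.ne'
  have hbin : (Polynomial.X + 1 : (Rpuv p)[X]) ^ (p ^ (l - 1))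
      = Polynomial.X ^ (p ^ (l - 1)) + 1 := by
    rw [add_pow_char_pow, one_pow]
  -- the weight-2 codeword
  have h2mem : 2 ∈ {w : ℕ | ∃ f : (Rpuv p)[X], f ≠ 0 ∧ f.degree < (p ^ l : ℕ) ∧
      Ideal.Quotient.mk (Ideal.span {(Polynomial.X : (Rpuv p)[X]) ^ (p ^ l) + 1}) f ∈
        Ideal.span {Ideal.Quotient.mk
          (Ideal.span {(Polynomial.X : (Rpuv p)[X]) ^ (p ^ l) + 1})
          (Polynomial.C (u * v) * (Polynomial.X + 1) ^ t)} ∧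
      w = f.support.card} := by
    refine ⟨Polynomial.C (u * v) * Polynomial.X ^ (p ^ (l - 1)) +
      Polynomial.C (u * v) * Polynomial.X ^ 0, ?_, ?_, ?_, ?_⟩
    · intro h
      have h0 := congrArg (fun q => Polynomial.coeff q 0) h
      simp only [Polynomial.coeff_add, Polynomial.coeff_zero, pow_zero, mul_one,
        Polynomial.coeff_C_mul, Polynomial.coeff_X_pow, Polynomial.coeff_C,
        if_pos rfl] at h0
      rw [if_neg (Ne.symm hn0), mul_zero, zero_add] at h0
      exact huv h0
    · have hle : (Polynomial.C (u * v) * Polynomial.X ^ (p ^ (l - 1)) +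
          Polynomial.C (u * v) * Polynomial.X ^ 0 : (Rpuv p)[X]).degree
            ≤ ((p ^ (l - 1) : ℕ) : WithBot ℕ) := by
        refine (Polynomial.degree_add_le _ _).trans ?_
        refine max_le (Polynomial.degree_C_mul_X_pow_le _ _) ?_
        exact (Polynomial.degree_C_mul_X_pow_le 0 _).trans (by exact_mod_cast Nat.zero_le _)
      refine hle.trans_lt ?_
      exact_mod_cast Nat.pow_lt_pow_right hp.one_lt (Nat.sub_lt (by omega) one_pos)
    · rw [Ideal.mem_span_singleton']
      refine ⟨Ideal.Quotient.mk _ ((Polynomial.X + 1) ^ (p ^ (l - 1) - t)), ?_⟩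
      rw [← map_mul]
      congr 1
      rw [mul_left_comm, ← pow_add, Nat.sub_add_cancel ht, hbin, pow_zero, mul_one]
      ring
    · rw [Polynomial.support_binomial hn0 huv huv, Finset.card_pair hn0]
  apply le_antisymm (Nat.sInf_le h2mem)
  refine le_csInf ⟨2, h2mem⟩ ?_
  rintro m ⟨f, hf0, hdeg, hfC, rfl⟩
  by_contra hlt
  push_neg at hlt
  rcases (by omega : f.support.card = 0 ∨ f.support.card = 1) with h | h
  · exact hf0 (Polynomial.support_eq_empty.mp (Finset.card_eq_zero.mp h))
  · obtain ⟨k, a, ha, hfeq⟩ := Polynomial.card_support_eq_one.mp h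
    rw [Ideal.mem_span_singleton'] at hfC
    obtain ⟨z, hz⟩ := hfC
    obtain ⟨h', rfl⟩ := Ideal.Quotient.mk_surjective z
    rw [← map_mul] at hz
    have hmem : h' * (Polynomial.C (u * v) * (Polynomial.X + 1) ^ t) - f ∈
        Ideal.span {(Polynomial.X : (Rpuv p)[X]) ^ (p ^ l) + 1} := Ideal.Quotient.eq.mp hz
    rw [Ideal.mem_span_singleton] at hmem
    obtain ⟨c, hc⟩ := hmem
    have heval := congrArg (Polynomial.eval (-1 : Rpuv p)) hc
    have hoddpl : Odd (p ^ l) := hodd.pow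
    have hX : ((-1 : Rpuv p) ^ p ^ l + 1) = 0 := by
      obtain ⟨m, hm⟩ := hoddpl
      rw [hm, pow_add, pow_mul, pow_one]
      have hsq : ((-1 : Rpuv p) ^ 2) = 1 := by norm_num
      simp only [hsq, one_pow, one_mul]
      exact neg_add_cancel 1
    simp only [Polynomial.eval_sub, Polynomial.eval_mul, Polynomial.eval_add,
      Polynomial.eval_pow, Polynomial.eval_X, Polynomial.eval_one, Polynomial.eval_C] at heval
    rw [neg_add_cancel, zero_pow ht0.ne', mul_zero, mul_zero, zero_sub,
      hX, zero_mul, neg_eq_zero, hfeq] at heval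
    rw [Polynomial.eval_mul, Polynomial.eval_pow, Polynomial.eval_C,
      Polynomial.eval_X] at heval
    have haz : a = 0 := by
      have h1 : a * (-1 : Rpuv p) ^ k * (-1) ^ k = 0 := by rw [heval, zero_mul]
      rw [mul_assoc, ← pow_add, ← two_mul, pow_mul] at h1
      have h2 : a = a * ((-1 : Rpuv p) ^ 2) ^ k := by ring
      rw [h2, h1]
    exact ha haz
end

section
/- Let p be an odd prime, n odd, and R = F_p[u,v]/⟨u²,v²,uv-vu⟩. If C is an ideal of R[x]/⟨x^n+1⟩ generated by a single polynomial G(x) = g_1(x) + u·g_{11}(x) + v·g_{12}(x) + uv·g_{13}(x) where G(x) divides x^n + 1 in R[x], then C is a free R-module of rank n - deg(g_1), with basis {G, xG, ..., x^{n-deg(g_1)-1}G}. -/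
open Polynomial MvPolynomial

noncomputable def rho (p : ℕ) : Rpuv p →+* ZMod p :=
  Ideal.Quotient.lift _ (MvPolynomial.constantCoeff) (by
    intro a ha
    have hle : Ideal.span {(MvPolynomial.X 0 : MvPolynomial (Fin 2) (ZMod p)) ^ 2,
        MvPolynomial.X 1 ^ 2,
        MvPolynomial.X 0 * MvPolynomial.X 1 - MvPolynomial.X 1 * MvPolynomial.X 0}
        ≤ RingHom.ker (MvPolynomial.constantCoeff (σ := Fin 2) (R := ZMod p)) := by
      rw [Ideal.span_le]
      intro x hx
      simp only [Set.mem_insert_iff, Set.mem_singleton_iff] at hx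
      rcases hx with rfl | rfl | rfl <;>
        simp [RingHom.mem_ker, mul_comm]
    exact hle ha)

lemma rho_mk (p : ℕ) (q : MvPolynomial (Fin 2) (ZMod p)) :
    rho p (Ideal.Quotient.mk _ q) = MvPolynomial.constantCoeff q :=
  Ideal.Quotient.lift_mk _ _ _

lemma rho_algebraMap (p : ℕ) (a : ZMod p) :
    rho p (algebraMap (ZMod p) (Rpuv p) a) = a := by
  rw [← Ideal.Quotient.mk_algebraMap, rho_mk]
  simp [MvPolynomial.algebraMap_eq]

lemma ker_rho_rep (p : ℕ) (a : Rpuv p) (h : rho p a = 0) :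
    ∃ x y, x * (Ideal.Quotient.mk _ (MvPolynomial.X 0)) +
      y * (Ideal.Quotient.mk _ (MvPolynomial.X 1)) = a := by
  obtain ⟨q, rfl⟩ := Ideal.Quotient.mk_surjective a
  rw [rho_mk] at h
  have hq : q ∈ Ideal.span (MvPolynomial.X '' Set.univ :
      Set (MvPolynomial (Fin 2) (ZMod p))) := by
    rw [MvPolynomial.mem_ideal_span_X_image]
    intro m hm
    by_contra hcon
    push_neg at hcon
    have hm0 : m = 0 := Finsupp.ext fun i => hcon i (Set.mem_univ i)
    rw [hm0] at hm
    rw [MvPolynomial.mem_support_iff] at hm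
    exact hm (congrFun MvPolynomial.constantCoeff_eq q ▸ h)
  have h2 : Ideal.Quotient.mk _ q ∈
      Ideal.map (Ideal.Quotient.mk (Ideal.span
        {(MvPolynomial.X 0 : MvPolynomial (Fin 2) (ZMod p)) ^ 2,
        MvPolynomial.X 1 ^ 2,
        MvPolynomial.X 0 * MvPolynomial.X 1 - MvPolynomial.X 1 * MvPolynomial.X 0}))
        (Ideal.span (MvPolynomial.X '' Set.univ)) :=
    Ideal.mem_map_of_mem _ hq
  rw [Ideal.map_span] at h2
  have hsub : (Ideal.Quotient.mk (Ideal.span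
        {(MvPolynomial.X 0 : MvPolynomial (Fin 2) (ZMod p)) ^ 2,
        MvPolynomial.X 1 ^ 2,
        MvPolynomial.X 0 * MvPolynomial.X 1 - MvPolynomial.X 1 * MvPolynomial.X 0})) ''
      (MvPolynomial.X '' Set.univ) ⊆
      {Ideal.Quotient.mk _ (MvPolynomial.X 0), Ideal.Quotient.mk _ (MvPolynomial.X 1)} := by
    rintro _ ⟨_, ⟨i, -, rfl⟩, rfl⟩
    fin_cases i
    · exact Set.mem_insert _ _
    · exact Set.mem_insert_of_mem _ rfl
  exact Ideal.mem_span_pair.mp (Ideal.span_mono hsub h2)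

lemma usq (p : ℕ) :
    (Ideal.Quotient.mk (Ideal.span
        {(MvPolynomial.X 0 : MvPolynomial (Fin 2) (ZMod p)) ^ 2,
        MvPolynomial.X 1 ^ 2,
        MvPolynomial.X 0 * MvPolynomial.X 1 - MvPolynomial.X 1 * MvPolynomial.X 0})
      (MvPolynomial.X 0)) *
    (Ideal.Quotient.mk _ (MvPolynomial.X 0)) = 0 := by
  rw [← map_mul, ← pow_two]
  exact Ideal.Quotient.eq_zero_iff_mem.mpr (Ideal.subset_span (by simp))

lemma vsq (p : ℕ) :
    (Ideal.Quotient.mk (Ideal.span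
        {(MvPolynomial.X 0 : MvPolynomial (Fin 2) (ZMod p)) ^ 2,
        MvPolynomial.X 1 ^ 2,
        MvPolynomial.X 0 * MvPolynomial.X 1 - MvPolynomial.X 1 * MvPolynomial.X 0})
      (MvPolynomial.X 1)) *
    (Ideal.Quotient.mk _ (MvPolynomial.X 1)) = 0 := by
  rw [← map_mul, ← pow_two]
  exact Ideal.Quotient.eq_zero_iff_mem.mpr (Ideal.subset_span (by simp))

lemma triple_zero (p : ℕ) (a b c : Rpuv p)
    (ha : rho p a = 0) (hb : rho p b = 0) (hc : rho p c = 0) :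
    a * b * c = 0 := by
  obtain ⟨xa, ya, hxa⟩ := ker_rho_rep p a ha
  obtain ⟨xb, yb, hxb⟩ := ker_rho_rep p b hb
  obtain ⟨xc, yc, hxc⟩ := ker_rho_rep p c hc
  set u := Ideal.Quotient.mk (Ideal.span
        {(MvPolynomial.X 0 : MvPolynomial (Fin 2) (ZMod p)) ^ 2,
        MvPolynomial.X 1 ^ 2,
        MvPolynomial.X 0 * MvPolynomial.X 1 - MvPolynomial.X 1 * MvPolynomial.X 0})
      (MvPolynomial.X 0) with hudef
  set v := Ideal.Quotient.mk (Ideal.span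
        {(MvPolynomial.X 0 : MvPolynomial (Fin 2) (ZMod p)) ^ 2,
        MvPolynomial.X 1 ^ 2,
        MvPolynomial.X 0 * MvPolynomial.X 1 - MvPolynomial.X 1 * MvPolynomial.X 0})
      (MvPolynomial.X 1) with hvdef
  have hu2 : u * u = 0 := usq p
  have hv2 : v * v = 0 := vsq p
  subst hxa hxb hxc
  linear_combination (xa*xb*xc*u + (xa*xb*yc + xa*yb*xc + ya*xb*xc)*v) * hu2 +
    ((xa*yb*yc + ya*xb*yc + ya*yb*xc)*u + ya*yb*yc*v) * hv2
section test
variable (p : ℕ) (R : Type) [CommRing R] (F : Type) [CommRing F] (ρ : R →+* F)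

lemma tripleP (htriple : ∀ a b c : R, ρ a = 0 → ρ b = 0 → ρ c = 0 → a * b * c = 0)
    (a b c : R[X]) (ha : a.map ρ = 0) (hb : b.map ρ = 0) (hc : c.map ρ = 0) :
    a * b * c = 0 := by
  set K := RingHom.ker ρ with hK
  have hK3 : K * K * K = ⊥ := by
    rw [eq_bot_iff]
    refine Ideal.mul_le.mpr fun r hr s hs => ?_
    refine Submodule.mul_induction_on hr (fun m hm n hn => ?_) (fun x y hx hy => ?_)
    · exact Ideal.mem_bot.mpr (htriple m n s hm hn hs)
    · rw [Ideal.mem_bot] at hx hy ⊢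
      rw [add_mul, hx, hy, add_zero]
  have hmem : a * b * c ∈ RingHom.ker (Polynomial.mapRingHom ρ) *
      RingHom.ker (Polynomial.mapRingHom ρ) * RingHom.ker (Polynomial.mapRingHom ρ) :=
    Ideal.mul_mem_mul (Ideal.mul_mem_mul (RingHom.mem_ker.mpr (by simpa using ha))
      (RingHom.mem_ker.mpr (by simpa using hb))) (RingHom.mem_ker.mpr (by simpa using hc))
  rw [Polynomial.ker_mapRingHom, ← Ideal.map_mul, ← Ideal.map_mul, ← hK, hK3,
    Ideal.map_bot] at hmem
  exact Ideal.mem_bot.mp hmem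

end test

section monicize
variable {R : Type} [CommRing R] {F : Type} [CommRing F]

lemma monicize (ρ : R →+* F) (σ : F →+* R) (hsec : ∀ a, ρ (σ a) = a)
    (htriple : ∀ a b c : R, ρ a = 0 → ρ b = 0 → ρ c = 0 → a * b * c = 0)
    [Nontrivial R] (H : R[X]) (hHm : (H.map ρ).Monic) :
    ∃ E M3 : R[X], IsUnit E ∧ M3.Monic ∧ M3.natDegree = (H.map ρ).natDegree ∧ E * H = M3 := by
  have hmapσρ : ∀ g : F[X], (g.map σ).map ρ = g := by
    intro g
    rw [Polynomial.map_map]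
    have : ρ.comp σ = RingHom.id F := RingHom.ext hsec
    rw [this, Polynomial.map_id]
  set M := (H.map ρ).map σ with hMdef
  have hM : M.Monic := hHm.map σ
  have hMnd : M.natDegree = (H.map ρ).natDegree := hHm.natDegree_map σ
  set δ := H - M with hδdef
  have hΦδ : δ.map ρ = 0 := by
    rw [hδdef, Polynomial.map_sub, hMdef, hmapσρ, sub_self]
  set q1 := δ /ₘ M with hq1def
  set r1 := δ %ₘ M with hr1def
  have hΦq1 : q1.map ρ = 0 := by
    rw [hq1def, Polynomial.map_divByMonic ρ hM, hΦδ, Polynomial.zero_divByMonic]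
  have hdd1 : r1 + M * q1 = δ := Polynomial.modByMonic_add_div δ M
  set M2 := M + r1 with hM2def
  have hM2 : M2.Monic := hM.add_of_left (Polynomial.degree_modByMonic_lt δ hM)
  have hM2nd : M2.natDegree = M.natDegree := by
    apply Polynomial.natDegree_eq_of_degree_eq
    exact Polynomial.degree_add_eq_left_of_degree_lt (Polynomial.degree_modByMonic_lt δ hM)
  set δ2 : R[X] := -(q1 * δ) with hδ2def
  have key1 : (1 - q1) * H = M2 + δ2 := by
    rw [hM2def, hδ2def]
    linear_combination (-1 : R[X]) * hdd1 + (q1 - 1) * hδdef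
  have hΦδ2 : δ2.map ρ = 0 := by
    rw [hδ2def, Polynomial.map_neg, Polynomial.map_mul, hΦq1, zero_mul, neg_zero]
  set q2 := δ2 /ₘ M2 with hq2def
  set r2 := δ2 %ₘ M2 with hr2def
  have hΦq2 : q2.map ρ = 0 := by
    rw [hq2def, Polynomial.map_divByMonic ρ hM2, hΦδ2, Polynomial.zero_divByMonic]
  have hdd2 : r2 + M2 * q2 = δ2 := Polynomial.modByMonic_add_div δ2 M2
  set M3 := M2 + r2 with hM3def
  have hM3 : M3.Monic := hM2.add_of_left (Polynomial.degree_modByMonic_lt δ2 hM2)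
  have hM3nd : M3.natDegree = (H.map ρ).natDegree := by
    rw [← hMnd, ← hM2nd]
    apply Polynomial.natDegree_eq_of_degree_eq
    exact Polynomial.degree_add_eq_left_of_degree_lt (Polynomial.degree_modByMonic_lt δ2 hM2)
  have hq2δ2 : q2 * δ2 = 0 := by
    have h := tripleP R F ρ htriple q2 q1 δ hΦq2 hΦq1 hΦδ
    rw [hδ2def]
    linear_combination (-1 : R[X]) * h
  have key2 : (1 - q2) * (1 - q1) * H = M3 := by
    rw [mul_assoc, key1, hM3def]
    linear_combination (-1 : R[X]) * hdd2 - hq2δ2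
  refine ⟨(1 - q2) * (1 - q1), M3, ?_, hM3, hM3nd, key2⟩
  have hn1 : IsNilpotent q1 := ⟨3, by
    rw [pow_succ, pow_succ, pow_one]
    exact tripleP R F ρ htriple q1 q1 q1 hΦq1 hΦq1 hΦq1⟩
  have hn2 : IsNilpotent q2 := ⟨3, by
    rw [pow_succ, pow_succ, pow_one]
    exact tripleP R F ρ htriple q2 q2 q2 hΦq2 hΦq2 hΦq2⟩
  exact (hn2.isUnit_one_sub).mul (hn1.isUnit_one_sub)

end monicize

set_option maxHeartbeats 2000000 in
set_option synthInstance.maxHeartbeats 400000 in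
theorem stmt_19 (p : ℕ) (hp : p.Prime) (hodd : Odd p)
    (n : ℕ) (hn : Odd n) (hpos : 0 < n)
    (u v : Rpuv p)
    (hu : u = Ideal.Quotient.mk _ (MvPolynomial.X 0))
    (hv : v = Ideal.Quotient.mk _ (MvPolynomial.X 1))
    (g1 g11 g12 g13 : (ZMod p)[X]) (hg1 : g1.Monic)
    (G : (Rpuv p)[X])
    (hG : G = g1.map (algebraMap (ZMod p) (Rpuv p)) +
        Polynomial.C u * g11.map (algebraMap (ZMod p) (Rpuv p)) +
        Polynomial.C v * g12.map (algebraMap (ZMod p) (Rpuv p)) +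
        Polynomial.C (u * v) * g13.map (algebraMap (ZMod p) (Rpuv p)))
    (hdvd : G ∣ (Polynomial.X : (Rpuv p)[X]) ^ n + 1)
    (C : Ideal ((Rpuv p)[X] ⧸ Ideal.span {(Polynomial.X : (Rpuv p)[X]) ^ n + 1}))
    (hC : C = Ideal.span
      {Ideal.Quotient.mk (Ideal.span {(Polynomial.X : (Rpuv p)[X]) ^ n + 1}) G}) :
    ∃ b : Module.Basis (Fin (n - g1.natDegree)) (Rpuv p) (C.restrictScalars (Rpuv p)),
      ∀ i : Fin (n - g1.natDegree),
        (b i : (Rpuv p)[X] ⧸ Ideal.span {(Polynomial.X : (Rpuv p)[X]) ^ n + 1}) =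
          Ideal.Quotient.mk (Ideal.span {(Polynomial.X : (Rpuv p)[X]) ^ n + 1})
            (Polynomial.X ^ (i : ℕ) * G) := by
  haveI : Fact p.Prime := ⟨hp⟩
  haveI : Nontrivial (Rpuv p) := (rho p).domain_nontrivial
  subst hC
  obtain ⟨H, hH⟩ := hdvd
  have hρu : rho p u = 0 := by rw [hu, rho_mk]; simp
  have hρv : rho p v = 0 := by rw [hv, rho_mk]; simp
  have hmapσρ : ∀ g : (ZMod p)[X],
      (g.map (algebraMap (ZMod p) (Rpuv p))).map (rho p) = g := by
    intro g
    rw [Polynomial.map_map]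
    have : (rho p).comp (algebraMap (ZMod p) (Rpuv p)) = RingHom.id (ZMod p) :=
      RingHom.ext (rho_algebraMap p)
    rw [this, Polynomial.map_id]
  have hΦG : G.map (rho p) = g1 := by
    simp [hG, Polynomial.map_add, Polynomial.map_mul, Polynomial.map_C,
      hmapσρ, hρu, hρv]
  have hfact : g1 * (H.map (rho p)) = Polynomial.X ^ n + 1 := by
    have h := congrArg (Polynomial.map (rho p)) hH
    simp only [Polynomial.map_add, Polynomial.map_pow, Polynomial.map_one,
      Polynomial.map_X, Polynomial.map_mul, hΦG] at h
    exact h.symm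
  have hXnF : ((Polynomial.X : (ZMod p)[X]) ^ n + 1).Monic :=
    monic_X_pow_add (by rw [degree_one]; exact_mod_cast hpos)
  have hXnR : ((Polynomial.X : (Rpuv p)[X]) ^ n + 1).Monic :=
    monic_X_pow_add (by rw [degree_one]; exact_mod_cast hpos)
  have hΦH0 : H.map (rho p) ≠ 0 := by
    intro h
    rw [h, mul_zero] at hfact
    exact hXnF.ne_zero hfact.symm
  have hmonΦH : (H.map (rho p)).Monic := by
    have hlc := congrArg Polynomial.leadingCoeff hfact
    rwa [Polynomial.leadingCoeff_mul, hg1.leadingCoeff, one_mul, hXnF.leadingCoeff] at hlc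
  have hndXn : ((Polynomial.X : (ZMod p)[X]) ^ n + 1).natDegree = n := by
    rw [← Polynomial.C_1, Polynomial.natDegree_X_pow_add_C]
  have hndsum : g1.natDegree + (H.map (rho p)).natDegree = n := by
    have h := congrArg Polynomial.natDegree hfact
    rwa [Polynomial.natDegree_mul hg1.ne_zero hΦH0, hndXn] at h
  set k := n - g1.natDegree with hkdef
  have hknd : (H.map (rho p)).natDegree = k := by omega
  obtain ⟨E, M3, hEunit, hM3, hM3nd, hEH⟩ :=
    monicize (rho p) (algebraMap (ZMod p) (Rpuv p)) (rho_algebraMap p)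
      (triple_zero p) H hmonΦH
  rw [hknd] at hM3nd
  set Iq : Ideal ((Rpuv p)[X]) :=
    Ideal.span {(Polynomial.X : (Rpuv p)[X]) ^ n + 1} with hIqdef
  have hπ0 : Ideal.Quotient.mk Iq ((Polynomial.X : (Rpuv p)[X]) ^ n + 1) = 0 :=
    Ideal.Quotient.eq_zero_iff_mem.mpr (Ideal.subset_span rfl)
  have hsmul : ∀ (c : Rpuv p) (f : (Rpuv p)[X]),
      c • (Ideal.Quotient.mk Iq f : (Rpuv p)[X] ⧸ Iq) =
        Ideal.Quotient.mk Iq (Polynomial.C c * f) := by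
    intro c f
    rw [← Polynomial.smul_eq_C_mul]
    rfl
  have hmemC : ∀ f : (Rpuv p)[X], Ideal.Quotient.mk Iq (f * G) ∈
      Ideal.span {Ideal.Quotient.mk Iq G} := fun f =>
    Ideal.mem_span_singleton'.mpr ⟨Ideal.Quotient.mk Iq f, by rw [← map_mul]⟩
  have hconv : ∀ c : Fin k → Rpuv p,
      Ideal.Quotient.mk Iq ((∑ i : Fin k, Polynomial.C (c i) * Polynomial.X ^ (i : ℕ)) * G) =
      ∑ i : Fin k, c i • Ideal.Quotient.mk Iq (Polynomial.X ^ (i : ℕ) * G) := by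
    intro c
    rw [Finset.sum_mul, map_sum]
    exact Finset.sum_congr rfl fun i _ => by rw [hsmul, mul_assoc]
  set w : Fin k → ((Ideal.span {Ideal.Quotient.mk Iq G}).restrictScalars (Rpuv p)) :=
    fun i => ⟨Ideal.Quotient.mk Iq (Polynomial.X ^ (i : ℕ) * G),
      hmemC (Polynomial.X ^ (i : ℕ))⟩ with hwdef
  -- linear independence
  have hindep : LinearIndependent (Rpuv p) w := by
    apply LinearIndependent.of_comp
      ((Ideal.span {Ideal.Quotient.mk Iq G}).restrictScalars (Rpuv p)).subtype
    rw [Fintype.linearIndependent_iff]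
    intro c hc
    have hc' : ∑ i : Fin k, c i • Ideal.Quotient.mk Iq (Polynomial.X ^ (i : ℕ) * G) = 0 := hc
    set f : (Rpuv p)[X] := ∑ i : Fin k, Polynomial.C (c i) * Polynomial.X ^ (i : ℕ) with hfdef
    have h1 : Ideal.Quotient.mk Iq (f * G) = 0 := by rw [hfdef, hconv]; exact hc'
    obtain ⟨t, ht⟩ := Ideal.mem_span_singleton'.mp (Ideal.Quotient.eq_zero_iff_mem.mp h1)
    have h3 : ((Polynomial.X : (Rpuv p)[X]) ^ n + 1) * f =
        ((Polynomial.X : (Rpuv p)[X]) ^ n + 1) * (t * H) := by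
      linear_combination f * hH - H * ht
    have h4 : f = t * H := hXnR.isRegular.left h3
    have h5 : M3 ∣ f := by
      have hfE : f * E = t * M3 := by
        rw [← hEH]; linear_combination E * h4
      obtain ⟨Einv, hEinv⟩ := hEunit.exists_right_inv
      exact ⟨t * Einv, by linear_combination Einv * hfE - f * hEinv⟩
    have hf0 : f = 0 := by
      by_contra hne
      obtain ⟨s, hs⟩ := h5
      have hs0 : s ≠ 0 := by
        rintro rfl
        rw [mul_zero] at hs
        exact hne hs
      have hnd : f.natDegree = k + s.natDegree := by
        rw [hs, hM3.natDegree_mul' hs0, hM3nd]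
      have hlt : f.natDegree < k := by
        rw [Polynomial.natDegree_lt_iff_degree_lt hne]
        refine lt_of_le_of_lt (Polynomial.degree_sum_le _ _) ?_
        rw [Finset.sup_lt_iff (by exact WithBot.bot_lt_coe k)]
        intro i _
        exact lt_of_le_of_lt (Polynomial.degree_C_mul_X_pow_le _ _)
          (by exact_mod_cast i.isLt)
      omega
    intro i
    have hco : f.coeff (i : ℕ) = c i := by
      rw [hfdef, Polynomial.finset_sum_coeff]
      rw [Finset.sum_eq_single i]
      · simp [Polynomial.coeff_C_mul, Polynomial.coeff_X_pow]
      · intro j _ hj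
        have : (i : ℕ) ≠ (j : ℕ) := fun h => hj (Fin.ext h.symm)
        simp [Polynomial.coeff_C_mul, Polynomial.coeff_X_pow, this]
      · intro h
        exact absurd (Finset.mem_univ i) h
    rw [hf0] at hco
    simpa using hco.symm
  -- spanning
  have hspan : ⊤ ≤ Submodule.span (Rpuv p) (Set.range w) := by
    rintro x -
    have hx : (x : (Rpuv p)[X] ⧸ Iq) ∈ Ideal.span {Ideal.Quotient.mk Iq G} := x.2
    obtain ⟨a, ha⟩ := Ideal.mem_span_singleton'.mp hx
    obtain ⟨f, rfl⟩ := Ideal.Quotient.mk_surjective a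
    set r := f %ₘ M3 with hrdef
    set q := f /ₘ M3 with hqdef
    have hdd : r + M3 * q = f := Polynomial.modByMonic_add_div f M3
    have hMG : Ideal.Quotient.mk Iq (M3 * G) = 0 := by
      have hMGe : M3 * G = E * ((Polynomial.X : (Rpuv p)[X]) ^ n + 1) := by
        rw [← hEH]; linear_combination (-E) * hH
      rw [hMGe, map_mul, hπ0]; exact mul_zero (Ideal.Quotient.mk Iq E)
    have hxr : (x : (Rpuv p)[X] ⧸ Iq) = Ideal.Quotient.mk Iq (r * G) := by
      have hfr : f * G = r * G + q * (M3 * G) := by linear_combination (-G) * hdd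
      rw [← ha, ← map_mul, hfr, map_add, map_mul, map_mul, hMG]; simp; exact mul_zero (Ideal.Quotient.mk Iq q)
    rcases eq_or_ne r 0 with hr0 | hr0
    · have hxz : x = 0 := by
        apply Subtype.ext
        rw [hxr, hr0, zero_mul, map_zero]
        rfl
      rw [hxz]
      exact Submodule.zero_mem _
    · have hlt : r.natDegree < k := by
        rw [Polynomial.natDegree_lt_iff_degree_lt hr0]
        have h1 := Polynomial.degree_modByMonic_lt f hM3
        rwa [Polynomial.degree_eq_natDegree hM3.ne_zero, hM3nd] at h1
      have hrsum : r = ∑ i : Fin k, Polynomial.C (r.coeff i) * Polynomial.X ^ (i : ℕ) := by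
        conv_lhs => rw [r.as_sum_range' k hlt]
        rw [← Fin.sum_univ_eq_sum_range]
        exact Finset.sum_congr rfl fun i _ => (Polynomial.C_mul_X_pow_eq_monomial).symm
      have h6 := hconv fun i => r.coeff i
      rw [← hrsum] at h6
      have hx2 : x = ∑ i : Fin k, (r.coeff (i : ℕ)) • w i := by
        apply Subtype.ext
        rw [hxr, h6]
        rw [show ((∑ i : Fin k, (r.coeff (i : ℕ)) • w i :
            (Ideal.span {Ideal.Quotient.mk Iq G}).restrictScalars (Rpuv p)) :
            (Rpuv p)[X] ⧸ Iq) =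
            ∑ i : Fin k, (r.coeff (i : ℕ)) • ((w i : (Rpuv p)[X] ⧸ Iq)) from by
          simp [AddSubmonoidClass.coe_finset_sum]]
      rw [hx2]
      exact Submodule.sum_mem _ fun i _ =>
        Submodule.smul_mem _ _ (Submodule.subset_span ⟨i, rfl⟩)
  refine ⟨Module.Basis.mk hindep hspan, fun i => ?_⟩
  rw [Module.Basis.mk_apply]
end
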